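/- Let f be a permutation of G such that for every S ∈ {{e}, Z \ {e}} ∪ {Y_i : i ∈ F_q} and all g, h ∈ G one has hg⁻¹ ∈ S if and only if f(h)f(g)⁻¹ ∈ S. If f(e) = e and f(y₀) = y₀, where y₀ = g(1,0,0), then f(z) = z for every z ∈ Z. Moreover, if additionally f(y) = y for some y ∈ G \ Z, then f(Zy) = Zy and f fixes the coset Zy pointwise. -/

import Mathlib

/-- The Heisenberg group `H₃(F)` of upper unitriangular 3×3 matrices over `F`,
recorded by the three free entries: `x` in position (1,2), `y` in position (2,3),
`z` in position (1,3). -/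
@[ext]
structure Heis (F : Type*) where
  x : F
  y : F
  z : F
deriving DecidableEq

namespace Heis

variable {F : Type*} [Field F]

/-- Multiplication corresponding to the matrix product. -/
instance : Group (Heis F) where
  mul a b := ⟨a.x + b.x, a.y + b.y, a.z + b.z + a.x * b.y⟩
  one := ⟨0, 0, 0⟩
  inv a := ⟨-a.x, -a.y, -a.z + a.x * a.y⟩
  mul_assoc a b c := Heis.ext
    (show a.x + b.x + c.x = a.x + (b.x + c.x) by ring)
    (show a.y + b.y + c.y = a.y + (b.y + c.y) by ring)
    (show a.z + b.z + a.x * b.y + c.z + (a.x + b.x) * c.y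
        = a.z + (b.z + c.z + b.x * c.y) + a.x * (b.y + c.y) by ring)
  one_mul a := Heis.ext
    (show (0 : F) + a.x = a.x by ring)
    (show (0 : F) + a.y = a.y by ring)
    (show (0 : F) + a.z + 0 * a.y = a.z by ring)
  mul_one a := Heis.ext
    (show a.x + 0 = a.x by ring)
    (show a.y + 0 = a.y by ring)
    (show a.z + 0 + a.x * 0 = a.z by ring)
  inv_mul_cancel a := Heis.ext
    (show -a.x + a.x = 0 by ring)
    (show -a.y + a.y = 0 by ring)
    (show -a.z + a.x * a.y + a.z + -a.x * a.y = 0 by ring)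

instance [Fintype F] : Fintype (Heis F) :=
  Fintype.ofEquiv (F × F × F)
    ⟨fun p => ⟨p.1, p.2.1, p.2.2⟩, fun a => (a.x, a.y, a.z), fun _ => rfl, fun _ => rfl⟩

end Heis

/-- The element `g(x,y,z)` of the Heisenberg group. -/
def gElt {F : Type*} (x y z : F) : Heis F := ⟨x, y, z⟩

/-- The center `Z = {g(0,0,z) : z ∈ F}` of the Heisenberg group, as a set. -/
def Zset (F : Type*) [Field F] : Set (Heis F) := {g : Heis F | g.x = 0 ∧ g.y = 0}

/-- The center `Z` as a subgroup of the Heisenberg group. -/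
def Zsub (F : Type*) [Field F] : Subgroup (Heis F) where
  carrier := Zset F
  mul_mem' := fun {a b} ha hb =>
    ⟨show a.x + b.x = 0 by rw [ha.1, hb.1, add_zero],
     show a.y + b.y = 0 by rw [ha.2, hb.2, add_zero]⟩
  one_mem' := ⟨rfl, rfl⟩
  inv_mem' := fun {a} ha =>
    ⟨show -a.x = 0 by rw [ha.1, neg_zero],
     show -a.y = 0 by rw [ha.2, neg_zero]⟩

/-- `γ_i(α,β) = αβ/2 + (α² − εβ²)i`. -/
def gam {F : Type*} [Field F] (ε i α β : F) : F := α * β / 2 + (α ^ 2 - ε * β ^ 2) * i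

/-- `Y_i = {g(α, β, γ_i(α,β)) : (α,β) ≠ (0,0)}`. -/
def Yset {F : Type*} [Field F] (ε i : F) : Set (Heis F) :=
  {g : Heis F | ∃ α β : F, (α, β) ≠ (0, 0) ∧ g = gElt α β (gam ε i α β)}

/-- `X_i = Y_i ∪ {e}`. -/
def Xset {F : Type*} [Field F] (ε i : F) : Set (Heis F) := Yset ε i ∪ {1}

/-- The map `ρ(M) : G → G` attached to the matrix `M = [[α,β],[εβ,α]]`. -/
def rho {F : Type*} [Field F] (ε α β : F) : Heis F → Heis F := fun g =>
  gElt (α * g.x + ε * β * g.y) (β * g.x + α * g.y)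
    (α * β * (g.x ^ 2 / 2 + ε * g.y ^ 2 / 2) + ε * β ^ 2 * g.x * g.y
      + (α ^ 2 - ε * β ^ 2) * g.z)

/-- `K = {ρ(M) : M = [[α,β],[εβ,α]], (α,β) ≠ (0,0)}`, as a set of maps `G → G`. -/
def Kset {F : Type*} [Field F] (ε : F) : Set (Heis F → Heis F) :=
  {f | ∃ α β : F, (α, β) ≠ (0, 0) ∧ f = rho ε α β}

/-- The family of sets `{e}`, `Z \ {e}`, `Y_i` for `i ∈ F`. -/
def SFam {F : Type*} [Field F] (ε : F) : Set (Set (Heis F)) :=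
  insert {1} (insert (Zset F \ {1}) {S | ∃ i : F, S = Yset ε i})

/-- `f` preserves each of the basic sets `{e}`, `Z \ {e}`, `Y_i`:
`hg⁻¹ ∈ S ↔ f(h)f(g)⁻¹ ∈ S`. -/
def Preserves {F : Type*} [Field F] (ε : F) (f : Heis F → Heis F) : Prop :=
  ∀ S ∈ SFam ε, ∀ g h : Heis F, h * g⁻¹ ∈ S ↔ f h * (f g)⁻¹ ∈ S

/-- The set of permutations of `G` of the form `x ↦ σ(x)·c` with `σ ∈ K`, `c ∈ G`. -/
def Aset {F : Type*} [Field F] (ε : F) : Set (Equiv.Perm (Heis F)) :=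
  {f | ∃ σ ∈ Kset ε, ∃ c : Heis F, ∀ x : Heis F, f x = σ x * c}

/-- The operation `ψ` on `F ∪ {∞}`, with `∞` encoded as `none`. -/
def psi {F : Type*} [Field F] [DecidableEq F] (ε : F) : Option F → Option F → Option F
  | none, j => j
  | some i, none => some i
  | some i, some j => if i + j = 0 then none else some ((i * j + ε / 16) / (i + j))

/-- `Y_k` for `k ∈ F ∪ {∞}`, where `Y_∞ = Z \ {e}`. -/
def YInf {F : Type*} [Field F] (ε : F) : Option F → Set (Heis F)
  | some i => Yset ε i
  | none => Zset F \ {1}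

section Aux

variable {F : Type*} [Field F]

lemma Heis.mul_def (a b : Heis F) :
    a * b = ⟨a.x + b.x, a.y + b.y, a.z + b.z + a.x * b.y⟩ := rfl

lemma Heis.inv_def (a : Heis F) :
    a⁻¹ = ⟨-a.x, -a.y, -a.z + a.x * a.y⟩ := rfl

lemma Heis.one_def : (1 : Heis F) = ⟨0, 0, 0⟩ := rfl

lemma delta_ne {ε : F} (hε : ¬IsSquare ε) {α β : F} (h : ¬(α = 0 ∧ β = 0)) :
    α ^ 2 - ε * β ^ 2 ≠ 0 := by
  intro hz
  by_cases hb : β = 0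
  · have ha : α ≠ 0 := fun ha => h ⟨ha, hb⟩
    apply ha
    have : α ^ 2 = 0 := by rw [hb] at hz; simpa using hz
    exact pow_eq_zero_iff (n := 2) (by norm_num) |>.mp this
  · apply hε
    have h2 : ε * β ^ 2 = α ^ 2 := by linear_combination -hz
    refine ⟨α / β, ?_⟩
    rw [div_mul_div_comm, eq_div_iff (mul_ne_zero hb hb)]
    linear_combination h2

lemma Zdiff_mem_SFam (ε : F) : Zset F \ {1} ∈ SFam ε := by
  simp [SFam]

lemma Yset_mem_SFam (ε i : F) : Yset ε i ∈ SFam ε := by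
  simp only [SFam, Set.mem_insert_iff, Set.mem_setOf_eq]
  exact Or.inr (Or.inr ⟨i, rfl⟩)

end Aux

/-- Let `f` be a permutation of `G` preserving every set
`S ∈ {{e}, Z \ {e}} ∪ {Y_i : i ∈ F_q}` in the sense that `hg⁻¹ ∈ S ↔ f(h)f(g)⁻¹ ∈ S`.
If `f(e) = e` and `f(y₀) = y₀` with `y₀ = g(1,0,0)`, then `f` fixes `Z` pointwise;
moreover if additionally `f(y) = y` for some `y ∈ G \ Z`, then `f(Zy) = Zy` and `f`
fixes the coset `Zy` pointwise. -/
theorem statement_10 {F : Type*} [Field F] [Fintype F]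
    (hodd : Odd (Fintype.card F)) (ε : F) (hε : ¬IsSquare ε)
    (f : Equiv.Perm (Heis F)) (hf : Preserves ε ⇑f)
    (h1 : f 1 = 1) (hy0 : f (gElt 1 0 0) = gElt 1 0 0) :
    (∀ z ∈ Zset F, f z = z) ∧
    ∀ y : Heis F, y ∉ Zset F → f y = y →
      (⇑f '' ((fun z => z * y) '' Zset F) = (fun z => z * y) '' Zset F) ∧
      (∀ z ∈ Zset F, f (z * y) = z * y) := by
  -- Part 1: f fixes Z pointwise.
  have hZ : ∀ z ∈ Zset F, f z = z := by
    intro z hz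
    obtain ⟨hzx, hzy⟩ := hz
    by_cases hc : z.z = 0
    · have : z = 1 := by
        rw [Heis.one_def]; ext <;> assumption
      rw [this, h1]
    · -- f z is central
      have hA : f z ∈ Zset F \ {1} := by
        have := (hf (Zset F \ {1}) (Zdiff_mem_SFam ε) 1 z).mp
        simp only [inv_one, mul_one, h1] at this
        apply this
        refine ⟨⟨hzx, hzy⟩, ?_⟩
        simp only [Set.mem_singleton_iff, Heis.one_def]
        intro h; apply hc; rw [h]
      obtain ⟨⟨hfx, hfy⟩, -⟩ := hA
      -- use Y_{z.z} with the pair (y₀, z)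
      have hB := (hf (Yset ε z.z) (Yset_mem_SFam ε z.z) (gElt 1 0 0) z).mp
      rw [hy0] at hB
      have hmem : z * (gElt 1 0 0)⁻¹ ∈ Yset ε z.z := by
        refine ⟨-1, 0, by norm_num, ?_⟩
        rw [Heis.inv_def, Heis.mul_def]
        simp only [gElt, gam]
        ext <;> simp [hzx, hzy] <;> ring
      obtain ⟨α, β, hne, heq⟩ := hB hmem
      rw [Heis.inv_def, Heis.mul_def] at heq
      simp only [gElt] at heq
      have hx' := congrArg Heis.x heq
      have hy' := congrArg Heis.y heq
      have hz' := congrArg Heis.z heq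
      simp only [hfx, hfy] at hx' hy' hz'
      have hα : α = -1 := by rw [← hx']; simp
      have hβ : β = 0 := by rw [← hy']; simp
      rw [hα, hβ] at hz'
      have hfzz : (f z).z = z.z := by
        rw [gam] at hz'
        linear_combination hz'
      ext
      · rw [hfx, hzx]
      · rw [hfy, hzy]
      · exact hfzz
  refine ⟨hZ, ?_⟩
  intro y hy hfy
  have hyne : ¬(y.x = 0 ∧ y.y = 0) := hy
  have hδ : y.x ^ 2 - ε * y.y ^ 2 ≠ 0 := delta_ne hε hyne
  -- Part 2: f fixes the coset Zy pointwise.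
  have hcoset : ∀ z ∈ Zset F, f (z * y) = z * y := by
    intro z hz
    obtain ⟨hzx, hzy⟩ := hz
    by_cases hc : z.z = 0
    · have hz1 : z = 1 := by rw [Heis.one_def]; ext <;> assumption
      rw [hz1, one_mul, hfy]
    · -- f (z*y) lies in the coset Zy
      have hA : f (z * y) * y⁻¹ ∈ Zset F \ {1} := by
        have := (hf (Zset F \ {1}) (Zdiff_mem_SFam ε) y (z * y)).mp
        rw [hfy] at this
        apply this
        have : z * y * y⁻¹ = z := by group
        rw [this]
        refine ⟨⟨hzx, hzy⟩, ?_⟩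
        simp only [Set.mem_singleton_iff, Heis.one_def]
        intro h; apply hc; rw [h]
      obtain ⟨⟨hfx, hfy'⟩, -⟩ := hA
      have hfx2 : (f (z * y)).x + -y.x = 0 := hfx
      have hfy2 : (f (z * y)).y + -y.y = 0 := hfy'
      have hwx : (f (z * y)).x = y.x := by linear_combination hfx2
      have hwy : (f (z * y)).y = y.y := by linear_combination hfy2
      -- the unique Y_i containing z*y
      set i : F := (z.z + y.z - y.x * y.y / 2) / (y.x ^ 2 - ε * y.y ^ 2) with hi
      have hgamval : gam ε i y.x y.y = z.z + y.z := by
        rw [gam, hi]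
        field_simp
        rw [mul_comm (y.y ^ 2) ε, mul_div_cancel_left₀ _ hδ]; ring
      have hB := (hf (Yset ε i) (Yset_mem_SFam ε i) 1 (z * y)).mp
      simp only [inv_one, mul_one, h1] at hB
      have hmem : z * y ∈ Yset ε i := by
        refine ⟨y.x, y.y, ?_, ?_⟩
        · intro hp
          apply hyne
          exact ⟨congrArg Prod.fst hp, congrArg Prod.snd hp⟩
        · rw [Heis.mul_def]
          simp only [gElt]
          ext <;> simp [hzx, hzy, hgamval] <;> ring
      obtain ⟨α, β, hne, heq⟩ := hB hmem
      simp only [gElt] at heq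
      have hx' := congrArg Heis.x heq
      have hy' := congrArg Heis.y heq
      have hz' := congrArg Heis.z heq
      simp only at hx' hy' hz'
      rw [hwx] at hx'
      rw [hwy] at hy'
      rw [← hx', ← hy', hgamval] at hz'
      ext
      · show (f (z * y)).x = z.x + y.x
        rw [hzx, hwx, zero_add]
      · show (f (z * y)).y = z.y + y.y
        rw [hzy, hwy, zero_add]
      · show (f (z * y)).z = z.z + y.z + z.x * y.y
        rw [hzx, hz']
        ring
  refine ⟨?_, hcoset⟩
  have hfix : ∀ s ∈ (fun z => z * y) '' Zset F, f s = s := by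
    rintro s ⟨z, hz, rfl⟩
    exact hcoset z hz
  calc ⇑f '' ((fun z => z * y) '' Zset F)
      = id '' ((fun z => z * y) '' Zset F) := Set.image_congr hfix
    _ = (fun z => z * y) '' Zset F := Set.image_id _
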